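/- Every g ∈ G maps Y bijectively to itself and the induced permutation of Y is an automorphism of the graph Ω; the resulting group homomorphism G → Aut(Ω) is bijective (an isomorphism of groups). -/

import Mathlib

open scoped TensorProduct

/-- The lattice `L = ℤ⁷` with standard basis `ℓ, e₁, …, e₆`. -/
abbrev L : Type := Fin 7 → ℤ

/-- The symmetric bilinear form `B(x,y) = x₀y₀ − x₁y₁ − ⋯ − x₆y₆`. -/
def B (x y : L) : ℤ :=
  x 0 * y 0 - (x 1 * y 1 + x 2 * y 2 + x 3 * y 3 + x 4 * y 4 + x 5 * y 5 + x 6 * y 6)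

/-- `h = 3ℓ − e₁ − ⋯ − e₆`, the hyperplane class, with `B(h,h) = 3`. -/
def hv : L := ![3, -1, -1, -1, -1, -1, -1]

/-- The set of lines: `Y = {y ∈ L : B(h,y) = 1 ∧ B(y,y) = −1}`. -/
def Yset : Set L := {y | B hv y = 1 ∧ B y y = -1}

/-- The set of roots: `R = {α ∈ L : B(h,α) = 0 ∧ B(α,α) = −2}`. -/
def Rset : Set L := {a | B hv a = 0 ∧ B a a = -2}

lemma B_comm (x y : L) : B x y = B y x := by unfold B; ring

/-- The graph `Ω` on the 27 lines: distinct `y, y′` adjacent iff `B(y,y′) = 1`. -/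
def Ω : SimpleGraph ↥Yset where
  Adj a b := a ≠ b ∧ B a.1 b.1 = 1
  symm := by
    refine ⟨?_⟩
    rintro a b ⟨hne, hB⟩
    exact ⟨hne.symm, by rw [B_comm]; exact hB⟩
  loopless := by refine ⟨?_⟩; rintro a ⟨hne, _⟩; exact hne rfl

/-- `g` is a reflection `s_α` for some root `α ∈ R`. -/
def IsReflection (g : L ≃ₗ[ℤ] L) : Prop := ∃ α ∈ Rset, ∀ x, g x = x + B x α • α

/-- `G = Weyl(E₆)`, the subgroup of `GL(L)` generated by the reflections `s_α`, `α ∈ R`. -/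
def G : Subgroup (L ≃ₗ[ℤ] L) := Subgroup.closure {g | IsReflection g}

-- basic bilinearity
lemma B_add_left (x y z : L) : B (x + y) z = B x z + B y z := by
  simp only [B, Pi.add_apply]; ring

lemma B_smul_left (c : ℤ) (x z : L) : B (c • x) z = c * B x z := by
  simp only [B, Pi.smul_apply, smul_eq_mul]; ring

lemma B_add_right (x y z : L) : B x (y + z) = B x y + B x z := by
  simp only [B, Pi.add_apply]; ring

lemma B_smul_right (c : ℤ) (x z : L) : B x (c • z) = c * B x z := by
  simp only [B, Pi.smul_apply, smul_eq_mul]; ring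

def reflAct (α : L) (x : L) : L := x + B x α • α

lemma reflAct_invol (α : L) (h2 : B α α = -2) (x : L) : reflAct α (reflAct α x) = x := by
  unfold reflAct
  rw [B_add_left, B_smul_left, h2]
  module

def sLin (α : L) : L →ₗ[ℤ] L where
  toFun := reflAct α
  map_add' x y := by unfold reflAct; rw [B_add_left]; module
  map_smul' c x := by
    show c • x + B (c • x) α • α = c • (x + B x α • α)
    rw [B_smul_left]; module

def sEquiv (α : L) (h2 : B α α = -2) : L ≃ₗ[ℤ] L :=
  { sLin α with
    invFun := reflAct α
    left_inv := reflAct_invol α h2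
    right_inv := reflAct_invol α h2 }

lemma sEquiv_mem (α : L) (hα : α ∈ Rset) : sEquiv α hα.2 ∈ G :=
  Subgroup.subset_closure ⟨α, hα, fun _ => rfl⟩

/-- preservation property -/
def Pres (g : L ≃ₗ[ℤ] L) : Prop := (∀ x y, B (g x) (g y) = B x y) ∧ g hv = hv

lemma pres_of_reflection {g : L ≃ₗ[ℤ] L} (h : IsReflection g) : Pres g := by
  obtain ⟨α, ⟨hα0, hα2⟩, hg⟩ := h
  constructor
  · intro x y
    rw [hg, hg]
    rw [B_add_left, B_add_right, B_add_right, B_smul_left, B_smul_right, B_smul_right,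
      B_smul_left, hα2, B_comm α y]
    ring
  · rw [hg, hα0]; simp

lemma pres_mul {g g' : L ≃ₗ[ℤ] L} (h : Pres g) (h' : Pres g') : Pres (g * g') := by
  constructor
  · intro x y
    have : ∀ z, (g * g') z = g (g' z) := fun z => rfl
    rw [this, this, h.1, h'.1]
  · show g (g' hv) = hv
    rw [h'.2, h.2]

lemma pres_inv {g : L ≃ₗ[ℤ] L} (h : Pres g) : Pres g⁻¹ := by
  constructor
  · intro x y
    have := h.1 (g⁻¹ x) (g⁻¹ y)
    rw [show g (g⁻¹ x) = x from g.apply_symm_apply x,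
      show g (g⁻¹ y) = y from g.apply_symm_apply y] at this
    exact this.symm
  · have : g⁻¹ (g hv) = hv := g.symm_apply_apply hv
    rwa [h.2] at this

lemma pres_of_mem {g : L ≃ₗ[ℤ] L} (hg : g ∈ G) : Pres g := by
  refine Subgroup.closure_induction (fun x hx => pres_of_reflection hx) ?_
    (fun x y _ _ hx hy => pres_mul hx hy) (fun x _ hx => pres_inv hx) hg
  exact ⟨fun x y => rfl, rfl⟩

lemma mapsTo_of_mem {g : L ≃ₗ[ℤ] L} (hg : g ∈ G) : Set.MapsTo (fun x => g x) Yset Yset := by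
  intro y hy
  obtain ⟨hp, hf⟩ := pres_of_mem hg
  exact ⟨by rw [← hf, hp]; exact hy.1, by rw [hp]; exact hy.2⟩

lemma bijOn_of_mem {g : L ≃ₗ[ℤ] L} (hg : g ∈ G) : Set.BijOn (fun x => g x) Yset Yset := by
  refine ⟨mapsTo_of_mem hg, fun a _ b _ hab => g.injective hab, ?_⟩
  intro y hy
  refine ⟨g⁻¹ y, mapsTo_of_mem (inv_mem hg) hy, g.apply_symm_apply y⟩
def lineVec : Fin 27 → L :=
  ![![0, 0, 0, 0, 0, 0, 1],
    ![0, 0, 0, 0, 0, 1, 0],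
    ![0, 0, 0, 0, 1, 0, 0],
    ![0, 0, 0, 1, 0, 0, 0],
    ![1, -1, 0, -1, 0, 0, 0],
    ![0, 1, 0, 0, 0, 0, 0],
    ![0, 0, 1, 0, 0, 0, 0],
    ![1, -1, -1, 0, 0, 0, 0],
    ![1, -1, 0, 0, -1, 0, 0],
    ![1, -1, 0, 0, 0, -1, 0],
    ![1, -1, 0, 0, 0, 0, -1],
    ![1, 0, -1, -1, 0, 0, 0],
    ![1, 0, -1, 0, -1, 0, 0],
    ![1, 0, -1, 0, 0, -1, 0],
    ![1, 0, -1, 0, 0, 0, -1],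
    ![1, 0, 0, -1, -1, 0, 0],
    ![1, 0, 0, -1, 0, -1, 0],
    ![1, 0, 0, -1, 0, 0, -1],
    ![1, 0, 0, 0, -1, -1, 0],
    ![1, 0, 0, 0, -1, 0, -1],
    ![1, 0, 0, 0, 0, -1, -1],
    ![2, -1, -1, -1, -1, -1, 0],
    ![2, -1, -1, -1, -1, 0, -1],
    ![2, -1, -1, -1, 0, -1, -1],
    ![2, -1, -1, 0, -1, -1, -1],
    ![2, -1, 0, -1, -1, -1, -1],
    ![2, 0, -1, -1, -1, -1, -1]]

def certs : Fin 27 → List (List L) :=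
  ![[[], [![0, 0, 0, 0, 0, -1, 1]], [![0, 0, 0, 0, -1, 0, 1]], [![0, 0, 0, -1, 0, 0, 1]], [![0, 0, -1, 0, 0, 0, 1]], [![0, -1, 0, 0, 0, 0, 1]], [![-1, 1, 1, 0, 0, 0, 1]], [![-1, 1, 0, 1, 0, 0, 1]], [![-1, 1, 0, 0, 1, 0, 1]], [![-1, 1, 0, 0, 0, 1, 1]], [![0, 0, 0, 0, 0, -1, 1], ![-1, 1, 0, 0, 0, 1, 1]], [![-1, 0, 1, 1, 0, 0, 1]], [![-1, 0, 1, 0, 1, 0, 1]], [![-1, 0, 1, 0, 0, 1, 1]], [![0, 0, 0, 0, 0, -1, 1], ![-1, 0, 1, 0, 0, 1, 1]], [![-1, 0, 0, 1, 1, 0, 1]], [![-1, 0, 0, 1, 0, 1, 1]], [![0, 0, 0, 0, 0, -1, 1], ![-1, 0, 0, 1, 0, 1, 1]], [![-1, 0, 0, 0, 1, 1, 1]], [![0, 0, 0, 0, 0, -1, 1], ![-1, 0, 0, 0, 1, 1, 1]], [![0, 0, 0, 0, -1, 0, 1], ![-1, 0, 0, 0, 1, 1, 1]], [![-2, 1,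 1, 1, 1, 1, 1]], [![0, 0, 0, 0, 0, -1, 1], ![-2, 1, 1, 1, 1, 1, 1]], [![0, 0, 0, 0, -1, 0, 1], ![-2, 1, 1, 1, 1, 1, 1]], [![0, 0, 0, -1, 0, 0, 1], ![-2, 1, 1, 1, 1, 1, 1]], [![0, 0, -1, 0, 0, 0, 1], ![-2, 1, 1, 1, 1, 1, 1]], [![0, -1, 0, 0, 0, 0, 1], ![-2, 1, 1, 1, 1, 1, 1]]],
    [[], [![0, 0, 0, 0, -1, 1, 0]], [![0, 0, 0, -1, 0, 1, 0]], [![0, 0, -1, 0, 0, 1, 0]], [![0, -1, 0, 0, 0, 1, 0]], [![-1, 1, 1, 0, 0, 1, 0]], [![-1, 1, 0, 1, 0, 1, 0]], [![-1, 1, 0, 0, 1, 1, 0]], [![0, 0, 0, 0, -1, 1, 0], ![-1, 1, 0, 0, 1, 1, 0]], [![-1, 0, 1, 1, 0, 1, 0]], [![-1, 0, 1, 0, 1, 1, 0]], [![0, 0, 0, 0, -1, 1, 0], ![-1, 0, 1, 0, 1, 1, 0]], [![-1, 0, 0, 1, 1, 1, 0]], [![0, 0, 0, 0, -1, 1, 0],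 ![-1, 0, 0, 1, 1, 1, 0]], [![0, 0, 0, -1, 0, 1, 0], ![-1, 0, 0, 1, 1, 1, 0]], [![-1, 1, 1, 0, 0, 1, 0], ![-1, 0, 0, 1, 1, 1, 0]]],
    [[], [![0, 0, 0, -1, 1, 0, 0]], [![0, 0, -1, 0, 1, 0, 0]], [![0, -1, 0, 0, 1, 0, 0]], [![-1, 1, 1, 0, 1, 0, 0]], [![-1, 1, 0, 1, 1, 0, 0]], [![0, 0, 0, -1, 1, 0, 0], ![-1, 1, 0, 1, 1, 0, 0]], [![-1, 0, 1, 1, 1, 0, 0]], [![0, 0, 0, -1, 1, 0, 0], ![-1, 0, 1, 1, 1, 0, 0]], [![0, 0, -1, 0, 1, 0, 0], ![-1, 0, 1, 1, 1, 0, 0]]],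
    [[], [![0, 0, -1, 1, 0, 0, 0]], [![0, -1, 0, 1, 0, 0, 0]], [![-1, 1, 1, 1, 0, 0, 0]], [![0, 0, -1, 1, 0, 0, 0], ![-1, 1, 1, 1, 0, 0, 0]], [![0, -1, 0, 1, 0, 0, 0], ![-1, 1, 1, 1, 0, 0, 0]]],
    [[![0, -1, 1, 0, 0, 0, 0]], []],
    [[]],
    [[]],
    [[]],
    [[]],
    [[]],
    [[]],
    [[]],
    [[]],
    [[]],
    [[]],
    [[]],
    [[]],
    [[]],
    [[]],
    [[]],
    [[]],
    [[]],
    [[]],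
    [[]],
    [[]],
    [[]],
    [[]]]

lemma lineVec_memY : ∀ c : Fin 27, B hv (lineVec c) = 1 ∧ B (lineVec c) (lineVec c) = -1 := by decide

lemma lineVec_inj : ∀ c d : Fin 27, lineVec c = lineVec d → c = d := by decide

lemma Bvals : ∀ c d : Fin 27, c ≠ d → B (lineVec c) (lineVec d) = 0 ∨ B (lineVec c) (lineVec d) = 1 := by decide


lemma cs6 (b c d e f g : ℤ) :
    (b+c+d+e+f+g)^2 ≤ 6*(b^2+c^2+d^2+e^2+f^2+g^2) := by
  nlinarith [sq_nonneg (b-c), sq_nonneg (b-d), sq_nonneg (b-e), sq_nonneg (b-f),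
    sq_nonneg (b-g), sq_nonneg (c-d), sq_nonneg (c-e), sq_nonneg (c-f), sq_nonneg (c-g),
    sq_nonneg (d-e), sq_nonneg (d-f), sq_nonneg (d-g), sq_nonneg (e-f), sq_nonneg (e-g),
    sq_nonneg (f-g)]

lemma cs5 (u v w t z : ℤ) : (u+v+w+t+z)^2 ≤ 5*(u^2+v^2+w^2+t^2+z^2) := by
  nlinarith [sq_nonneg (u-v), sq_nonneg (u-w), sq_nonneg (u-t), sq_nonneg (u-z),
    sq_nonneg (v-w), sq_nonneg (v-t), sq_nonneg (v-z), sq_nonneg (w-t),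
    sq_nonneg (w-z), sq_nonneg (t-z)]

lemma B_hv_expand (y : L) : B hv y = 3 * y 0 + y 1 + y 2 + y 3 + y 4 + y 5 + y 6 := by
  have e0 : hv 0 = 3 := rfl
  have e1 : hv 1 = -1 := rfl
  have e2 : hv 2 = -1 := rfl
  have e3 : hv 3 = -1 := rfl
  have e4 : hv 4 = -1 := rfl
  have e5 : hv 5 = -1 := rfl
  have e6 : hv 6 = -1 := rfl
  unfold B
  rw [e0, e1, e2, e3, e4, e5, e6]; ring
lemma B_self_expand (y : L) : B y y =
    y 0 * y 0 - (y 1 * y 1 + y 2 * y 2 + y 3 * y 3 + y 4 * y 4 + y 5 * y 5 + y 6 * y 6) := rfl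

lemma coordBound (a x s q : ℤ) (ha0 : 0 ≤ a) (ha2 : a ≤ 2) (cs : s^2 ≤ 5*q)
    (hxs : x + s = 1 - 3*a) (hxq : x^2 + q = a^2 + 1) : -1 ≤ x ∧ x ≤ 1 := by
  constructor
  · by_contra hx; push_neg at hx
    have hx' : x ≤ -2 := by omega
    nlinarith [mul_nonneg (by omega : (0:ℤ) ≤ -2 - x) (by omega : (0:ℤ) ≤ 26 - 6*a),
      mul_nonneg (by omega : (0:ℤ) ≤ 2 - a) (by omega : (0:ℤ) ≤ 10 - 4*a),
      sq_nonneg (x+2)]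
  · by_contra hx; push_neg at hx
    have hx' : 2 ≤ x := by omega
    nlinarith [mul_nonneg (by omega : (0:ℤ) ≤ x - 2) ha0, sq_nonneg (x-2), ha0]

lemma memY_bounds (y : L) (h1 : B hv y = 1) (h2 : B y y = -1) :
    (0 ≤ y 0 ∧ y 0 ≤ 2) ∧ ∀ i : Fin 7, i ≠ 0 → -1 ≤ y i ∧ y i ≤ 1 := by
  rw [B_hv_expand] at h1
  rw [B_self_expand] at h2
  set a := y 0; set b := y 1; set c := y 2; set d := y 3; set e := y 4; set f := y 5
  set g := y 6
  have hcs := cs6 b c d e f g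
  have haq : 3*a^2 - 6*a - 5 ≤ 0 := by nlinarith
  have ha0 : 0 ≤ a := by nlinarith [sq_nonneg (a+1)]
  have ha2 : a ≤ 2 := by nlinarith [sq_nonneg (a-3)]
  have key := fun x s q cs hxs hxq => coordBound a x s q ha0 ha2 cs hxs hxq
  refine ⟨⟨ha0, ha2⟩, ?_⟩
  intro i hi
  fin_cases i
  · exact absurd rfl hi
  · exact key b (c+d+e+f+g) (c^2+d^2+e^2+f^2+g^2) (cs5 c d e f g) (by linarith) (by linear_combination -h2)
  · exact key c (b+d+e+f+g) (b^2+d^2+e^2+f^2+g^2) (cs5 b d e f g) (by linarith) (by linear_combination -h2)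
  · exact key d (b+c+e+f+g) (b^2+c^2+e^2+f^2+g^2) (cs5 b c e f g) (by linarith) (by linear_combination -h2)
  · exact key e (b+c+d+f+g) (b^2+c^2+d^2+f^2+g^2) (cs5 b c d f g) (by linarith) (by linear_combination -h2)
  · exact key f (b+c+d+e+g) (b^2+c^2+d^2+e^2+g^2) (cs5 b c d e g) (by linarith) (by linear_combination -h2)
  · exact key g (b+c+d+e+f) (b^2+c^2+d^2+e^2+f^2) (cs5 b c d e f) (by linarith) (by linear_combination -h2)


set_option maxRecDepth 4000 in
lemma enumY : ∀ a b c d e f g : Fin 3,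
    (B hv ![(a:ℤ), (b:ℤ)-1, (c:ℤ)-1, (d:ℤ)-1, (e:ℤ)-1, (f:ℤ)-1, (g:ℤ)-1] = 1) →
    (B ![(a:ℤ), (b:ℤ)-1, (c:ℤ)-1, (d:ℤ)-1, (e:ℤ)-1, (f:ℤ)-1, (g:ℤ)-1]
       ![(a:ℤ), (b:ℤ)-1, (c:ℤ)-1, (d:ℤ)-1, (e:ℤ)-1, (f:ℤ)-1, (g:ℤ)-1] = -1) →
    ∃ c' : Fin 27, ![(a:ℤ), (b:ℤ)-1, (c:ℤ)-1, (d:ℤ)-1, (e:ℤ)-1, (f:ℤ)-1, (g:ℤ)-1]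
      = lineVec c' := by decide

lemma memY_iff_lineVec {y : L} (hy : y ∈ Yset) : ∃ c : Fin 27, y = lineVec c := by
  obtain ⟨h1, h2⟩ := hy
  obtain ⟨⟨ha0, ha2⟩, hrest⟩ := memY_bounds y h1 h2
  have b1 := hrest 1 (by decide); have b2 := hrest 2 (by decide)
  have b3 := hrest 3 (by decide); have b4 := hrest 4 (by decide)
  have b5 := hrest 5 (by decide); have b6 := hrest 6 (by decide)
  have hy0 : y = ![((⟨(y 0).toNat, by omega⟩ : Fin 3):ℤ) , ((⟨(y 1 + 1).toNat, by omega⟩ : Fin 3):ℤ)-1,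
      ((⟨(y 2 + 1).toNat, by omega⟩ : Fin 3):ℤ)-1, ((⟨(y 3 + 1).toNat, by omega⟩ : Fin 3):ℤ)-1,
      ((⟨(y 4 + 1).toNat, by omega⟩ : Fin 3):ℤ)-1, ((⟨(y 5 + 1).toNat, by omega⟩ : Fin 3):ℤ)-1,
      ((⟨(y 6 + 1).toNat, by omega⟩ : Fin 3):ℤ)-1] := by
    funext i
    fin_cases i
    · show y 0 = ((y 0).toNat : ℤ); omega
    · show y 1 = ((y 1 + 1).toNat : ℤ) - 1; omega
    · show y 2 = ((y 2 + 1).toNat : ℤ) - 1; omega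
    · show y 3 = ((y 3 + 1).toNat : ℤ) - 1; omega
    · show y 4 = ((y 4 + 1).toNat : ℤ) - 1; omega
    · show y 5 = ((y 5 + 1).toNat : ℤ) - 1; omega
    · show y 6 = ((y 6 + 1).toNat : ℤ) - 1; omega
  rw [hy0]; rw [hy0] at h1 h2
  exact enumY _ _ _ _ _ _ _ h1 h2

def applyWord (w : List L) (x : L) : L := w.foldr reflAct x

set_option maxRecDepth 4000 in
lemma certs_roots : ∀ k : Fin 27, ∀ w ∈ certs k, ∀ α ∈ w, B hv α = 0 ∧ B α α = -2 := by decide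

set_option maxRecDepth 10000 in
lemma certs_complete : ∀ k c : Fin 27,
    (∀ j : Fin 27, j < k →
      B (lineVec c) (lineVec j) = B (lineVec k) (lineVec j) ∧ lineVec c ≠ lineVec j) →
    ∃ w ∈ certs k, applyWord w (lineVec c) = lineVec k ∧
      ∀ j : Fin 27, j < k → applyWord w (lineVec j) = lineVec j := by decide

lemma word_mem (w : List L) (hw : ∀ α ∈ w, B hv α = 0 ∧ B α α = -2) :
    ∃ g : L ≃ₗ[ℤ] L, g ∈ G ∧ ∀ x, g x = applyWord w x := by
  induction w with
  | nil => exact ⟨1, one_mem G, fun x => rfl⟩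
  | cons α w ih =>
    obtain ⟨g, hg, hgx⟩ := ih (fun β hβ => hw β (List.mem_cons_of_mem _ hβ))
    have hα := hw α List.mem_cons_self
    refine ⟨sEquiv α hα.2 * g, mul_mem (sEquiv_mem α ⟨hα.1, hα.2⟩) hg, fun x => ?_⟩
    show sEquiv α hα.2 (g x) = reflAct α (applyWord w x)
    rw [hgx]; rfl

def lv (c : Fin 27) : ↥Yset := ⟨lineVec c, lineVec_memY c⟩

/-- the graph automorphism induced by `g ∈ G` -/
def Fmap (g : ↥G) : Ω ≃g Ω where
  toFun y := ⟨(g : L ≃ₗ[ℤ] L) y.1, mapsTo_of_mem g.2 y.2⟩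
  invFun y := ⟨(g : L ≃ₗ[ℤ] L)⁻¹ y.1, mapsTo_of_mem (inv_mem g.2) y.2⟩
  left_inv y := Subtype.ext ((g : L ≃ₗ[ℤ] L).symm_apply_apply y.1)
  right_inv y := Subtype.ext ((g : L ≃ₗ[ℤ] L).apply_symm_apply y.1)
  map_rel_iff' := by
    intro a b
    constructor
    · rintro ⟨hne, hB⟩
      have hB' : B ((g : L ≃ₗ[ℤ] L) a.1) ((g : L ≃ₗ[ℤ] L) b.1) = 1 := hB
      rw [(pres_of_mem g.2).1 a.1 b.1] at hB'
      exact ⟨fun h => hne (by rw [h]), hB'⟩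
    · rintro ⟨hne, hB⟩
      refine ⟨fun h => hne (Subtype.ext ((g : L ≃ₗ[ℤ] L).injective
        (congrArg Subtype.val h))), ?_⟩
      show B ((g : L ≃ₗ[ℤ] L) a.1) ((g : L ≃ₗ[ℤ] L) b.1) = 1
      rw [(pres_of_mem g.2).1 a.1 b.1]; exact hB

lemma B_mem_cases {u v : L} (hu : u ∈ Yset) (hv' : v ∈ Yset) (hne : u ≠ v) :
    B u v = 0 ∨ B u v = 1 := by
  obtain ⟨c, rfl⟩ := memY_iff_lineVec hu
  obtain ⟨d, rfl⟩ := memY_iff_lineVec hv'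
  exact Bvals c d (fun h => hne (by rw [h]))

lemma iso_B (φ : Ω ≃g Ω) (a b : ↥Yset) : B (φ a).1 (φ b).1 = B a.1 b.1 := by
  by_cases hab : a = b
  · subst hab
    rw [(φ a).2.2, a.2.2]
  · have hab' : a.1 ≠ b.1 := fun h => hab (Subtype.ext h)
    have hne : φ a ≠ φ b := fun h => hab (φ.toEquiv.injective h)
    have hne' : (φ a).1 ≠ (φ b).1 := fun h => hne (Subtype.ext h)
    have hAdj : Ω.Adj (φ a) (φ b) ↔ Ω.Adj a b := φ.map_rel_iff'
    by_cases hB : B a.1 b.1 = 1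
    · have : Ω.Adj (φ a) (φ b) := hAdj.mpr ⟨hab, hB⟩
      rw [this.2, hB]
    · have hnAdj : ¬ Ω.Adj (φ a) (φ b) := fun h => hB (hAdj.mp h).2
      have h1 : B (φ a).1 (φ b).1 ≠ 1 := fun h => hnAdj ⟨hne, h⟩
      rcases B_mem_cases (φ a).2 (φ b).2 hne' with h | h
      · rcases B_mem_cases a.2 b.2 hab' with h' | h'
        · rw [h, h']
        · exact absurd h' hB
      · exact absurd h h1

lemma chain (φ : Ω ≃g Ω) : ∀ n : ℕ, n ≤ 27 → ∃ g : L ≃ₗ[ℤ] L, g ∈ G ∧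
    ∀ j : Fin 27, (j : ℕ) < n → g ((φ (lv j)).1) = lineVec j := by
  intro n hn
  induction n with
  | zero => exact ⟨1, one_mem G, fun j hj => absurd hj (Nat.not_lt_zero _)⟩
  | succ n ih =>
    obtain ⟨g, hg, hfix⟩ := ih (by omega)
    set k : Fin 27 := ⟨n, by omega⟩ with hk
    obtain ⟨c, hc0⟩ := memY_iff_lineVec (mapsTo_of_mem hg (φ (lv k)).2)
    have hc : g ((φ (lv k)).1) = lineVec c := hc0
    have hcompat : ∀ j : Fin 27, j < k →
        B (lineVec c) (lineVec j) = B (lineVec k) (lineVec j) ∧ lineVec c ≠ lineVec j := by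
      intro j hj
      have hjn : (j : ℕ) < n := hj
      have hfj := hfix j hjn
      constructor
      · calc B (lineVec c) (lineVec j)
              = B (g ((φ (lv k)).1)) (g ((φ (lv j)).1)) := by rw [hc, hfj]
          _ = B ((φ (lv k)).1) ((φ (lv j)).1) := (pres_of_mem hg).1 _ _
          _ = B (lineVec k) (lineVec j) := iso_B φ (lv k) (lv j)
      · intro heq
        have : g ((φ (lv j)).1) = g ((φ (lv k)).1) := by rw [hfj, ← heq, hc]
        have h2 : (φ (lv j)).1 = (φ (lv k)).1 := g.injective this
        have h3 : lv j = lv k := φ.toEquiv.injective (Subtype.ext h2)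
        have h4 : lineVec j = lineVec k := congrArg Subtype.val h3
        have : j = k := lineVec_inj j k h4
        omega
    obtain ⟨w, hwmem, hwc, hwfix⟩ := certs_complete k c hcompat
    obtain ⟨h, hhG, hhx⟩ := word_mem w (certs_roots k w hwmem)
    refine ⟨h * g, mul_mem hhG hg, ?_⟩
    intro j hj
    have hcomp : (h * g) ((φ (lv j)).1) = h (g ((φ (lv j)).1)) := rfl
    rcases Nat.lt_or_ge (j : ℕ) n with hlt | hge
    · rw [hcomp, hfix j hlt, hhx, hwfix j hlt]
    · have hjk : j = k := by
        apply Fin.ext; show (j : ℕ) = n; omega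
      rw [hjk]
      show h (g ((φ (lv k)).1)) = lineVec k
      rw [hc, hhx, hwc]

lemma surj_aux (φ : Ω ≃g Ω) : ∃ g : L ≃ₗ[ℤ] L, g ∈ G ∧
    ∀ y : ↥Yset, (g : L ≃ₗ[ℤ] L) y.1 = (φ y).1 := by
  obtain ⟨g, hg, hfix⟩ := chain φ 27 le_rfl
  refine ⟨g⁻¹, inv_mem hg, ?_⟩
  intro y
  obtain ⟨c, hc⟩ := memY_iff_lineVec y.2
  have hy : y = lv c := Subtype.ext hc
  subst hy
  have h1 := hfix c c.isLt
  calc g⁻¹ (lv c).1 = g⁻¹ (g ((φ (lv c)).1)) := by rw [h1]; rfl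
    _ = (φ (lv c)).1 := g.symm_apply_apply _

def stdv (i : Fin 7) : L := fun j => if i = j then (1:ℤ) else 0

lemma agree_of_eq_on_Y {g g' : L ≃ₗ[ℤ] L} (h : ∀ y ∈ Yset, g y = g' y) : g = g' := by
  have m1 : (![0,1,0,0,0,0,0] : L) ∈ Yset := ⟨by decide, by decide⟩
  have m2 : (![0,0,1,0,0,0,0] : L) ∈ Yset := ⟨by decide, by decide⟩
  have m3 : (![0,0,0,1,0,0,0] : L) ∈ Yset := ⟨by decide, by decide⟩
  have m4 : (![0,0,0,0,1,0,0] : L) ∈ Yset := ⟨by decide, by decide⟩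
  have m5 : (![0,0,0,0,0,1,0] : L) ∈ Yset := ⟨by decide, by decide⟩
  have m6 : (![0,0,0,0,0,0,1] : L) ∈ Yset := ⟨by decide, by decide⟩
  have m0 : (![1,-1,-1,0,0,0,0] : L) ∈ Yset := ⟨by decide, by decide⟩
  have hstd : ∀ i : Fin 7, g (stdv i) = g' (stdv i) := by
    intro i
    fin_cases i
    · show g (stdv 0) = g' (stdv 0)
      rw [show stdv 0 = ![1,-1,-1,0,0,0,0] + ![0,1,0,0,0,0,0] + ![0,0,1,0,0,0,0] from by decide,
        map_add, map_add, map_add, map_add, h _ m0, h _ m1, h _ m2]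
    · show g (stdv 1) = g' (stdv 1)
      rw [show stdv 1 = ![0,1,0,0,0,0,0] from by decide, h _ m1]
    · show g (stdv 2) = g' (stdv 2)
      rw [show stdv 2 = ![0,0,1,0,0,0,0] from by decide, h _ m2]
    · show g (stdv 3) = g' (stdv 3)
      rw [show stdv 3 = ![0,0,0,1,0,0,0] from by decide, h _ m3]
    · show g (stdv 4) = g' (stdv 4)
      rw [show stdv 4 = ![0,0,0,0,1,0,0] from by decide, h _ m4]
    · show g (stdv 5) = g' (stdv 5)
      rw [show stdv 5 = ![0,0,0,0,0,1,0] from by decide, h _ m5]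
    · show g (stdv 6) = g' (stdv 6)
      rw [show stdv 6 = ![0,0,0,0,0,0,1] from by decide, h _ m6]
  apply LinearEquiv.toLinearMap_injective
  apply LinearMap.ext
  intro x
  have hx : x = ∑ i : Fin 7, x i • stdv i := pi_eq_sum_univ x
  calc g.toLinearMap x = g (∑ i : Fin 7, x i • stdv i) := by rw [← hx]; rfl
    _ = ∑ i : Fin 7, x i • g (stdv i) := by
        rw [map_sum]
        exact Finset.sum_congr rfl (fun i _ => g.map_smul _ _)
    _ = ∑ i : Fin 7, x i • g' (stdv i) := by simp only [hstd]
    _ = g' (∑ i : Fin 7, x i • stdv i) := by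
        rw [map_sum]
        exact (Finset.sum_congr rfl (fun i _ => g'.map_smul _ _)).symm
    _ = g'.toLinearMap x := by rw [← hx]; rfl

/-- Every `g ∈ G` maps `Y` bijectively to itself; the induced permutations of `Y` are
automorphisms of `Ω`, and the resulting map `G → Aut(Ω)` (which is automatically a group
homomorphism) is bijective. -/
theorem weyl_is_graph_automorphism_group :
    (∀ g ∈ G, Set.BijOn (fun x => g x) Yset Yset) ∧
    ∃ F : ↥G → (Ω ≃g Ω),
      Function.Bijective F ∧
      ∀ (g : ↥G) (y : ↥Yset), (((F g) y : ↥Yset) : L) = (g : L ≃ₗ[ℤ] L) (y : L) := by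
  refine ⟨fun g hg => bijOn_of_mem hg, Fmap, ⟨?_, ?_⟩, fun g y => rfl⟩
  · intro g g' hgg
    apply Subtype.ext
    apply agree_of_eq_on_Y
    intro y hy
    have := congrArg (fun (ψ : Ω ≃g Ω) => (ψ ⟨y, hy⟩).1) hgg
    exact this
  · intro φ
    obtain ⟨g, hg, hgy⟩ := surj_aux φ
    refine ⟨⟨g, hg⟩, ?_⟩
    apply RelIso.ext
    intro y
    exact Subtype.ext (hgy y)
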